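/- Elliptic integral evaluations of the scattering Fourier coefficients: with t = k^{-2} ∈ (0,1), F_0 = (2/π)K(t), F_1 = F_{-1} = (2/π)t^{-1/2}[K(t) - E(t)], F̄_0 = (2/π)[(t-1)K(t) + 2E(t)], and F̄_1 = F̄_{-1} = -(2/(3π)) t^{-1/2}[(t-1)K(t) + (t+1)E(t)], where K and E are the complete elliptic integrals of the first and second kind with parameter t (i.e. K(t) = ∫_0^{π/2} (1 - t sin²θ)^{-1/2} dθ, E(t) = ∫_0^{π/2} (1 - t sin²θ)^{1/2} dθ). -/

import Mathlib

open Real intervalIntegral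

/-- Complete elliptic integral of the first kind with parameter `t`. -/
noncomputable def ellK (t : ℝ) : ℝ :=
  ∫ θ in (0:ℝ)..(π/2), (1 - t * Real.sin θ ^ 2) ^ (-(1:ℝ)/2)

/-- Complete elliptic integral of the second kind with parameter `t`. -/
noncomputable def ellE (t : ℝ) : ℝ :=
  ∫ θ in (0:ℝ)..(π/2), (1 - t * Real.sin θ ^ 2) ^ ((1:ℝ)/2)

/-- The scattering Fourier coefficient
`F_n = (1/2π)∫_{-π}^π e^{inθ}(1-√t e^{iθ})^{-1/2}(1-√t e^{-iθ})^{-1/2} dθ`. -/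
noncomputable def Fcoeff (t : ℝ) (n : ℤ) : ℂ :=
  (1 / (2 * (π : ℂ))) * ∫ θ in (-π)..π,
    Complex.exp (Complex.I * n * θ) *
      (1 - (Real.sqrt t : ℂ) * Complex.exp (Complex.I * θ)) ^ (-((1 : ℂ) / 2)) *
      (1 - (Real.sqrt t : ℂ) * Complex.exp (-(Complex.I * θ))) ^ (-((1 : ℂ) / 2))

/-- The reciprocal scattering Fourier coefficient
`F̄_n = (1/2π)∫_{-π}^π e^{-inθ}(1-√t e^{iθ})^{1/2}(1-√t e^{-iθ})^{1/2} dθ`. -/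
noncomputable def Fbcoeff (t : ℝ) (n : ℤ) : ℂ :=
  (1 / (2 * (π : ℂ))) * ∫ θ in (-π)..π,
    Complex.exp (-(Complex.I * n * θ)) *
      (1 - (Real.sqrt t : ℂ) * Complex.exp (Complex.I * θ)) ^ ((1 : ℂ) / 2) *
      (1 - (Real.sqrt t : ℂ) * Complex.exp (-(Complex.I * θ))) ^ ((1 : ℂ) / 2)

/-- Wallis coefficients: `wA m = (2m-1)!!/(2m)!! = C(2m,m)/4^m`. -/
noncomputable def wA (m : ℕ) : ℝ := ∏ i ∈ Finset.range m, (2*(i:ℝ)+1)/(2*(i:ℝ)+2)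

lemma wA_zero : wA 0 = 1 := by simp [wA]

lemma wA_succ (m : ℕ) : wA (m+1) = wA m * ((2*(m:ℝ)+1)/(2*(m:ℝ)+2)) :=
  Finset.prod_range_succ _ m

lemma wA_pos (m : ℕ) : 0 < wA m :=
  Finset.prod_pos (fun i _ => by positivity)

lemma wA_le_one (m : ℕ) : wA m ≤ 1 := by
  induction m with
  | zero => simp [wA_zero]
  | succ m ih =>
    rw [wA_succ]
    have h1 : (2*(m:ℝ)+1)/(2*(m:ℝ)+2) ≤ 1 := by
      rw [div_le_one (by positivity)]; linarith
    nlinarith [wA_pos m]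

lemma wA_abs_le_one (m : ℕ) : |wA m| ≤ 1 := by
  rw [abs_of_pos (wA_pos m)]; exact wA_le_one m

/-- Coefficients of `(1-x)^{1/2}`. -/
noncomputable def wC (m : ℕ) : ℝ := wA m / (1 - 2*(m:ℝ))

lemma one_sub_two_mul_ne (m : ℕ) : (1 - 2*(m:ℝ)) ≠ 0 := by
  rcases m with _ | m
  · norm_num
  · push_cast; intro h; nlinarith [Nat.cast_nonneg (α := ℝ) m]

lemma one_le_abs_one_sub_two_mul (m : ℕ) : 1 ≤ |1 - 2*(m:ℝ)| := by
  rcases m with _ | m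
  · norm_num
  · push_cast
    rw [abs_sub_comm, abs_of_nonneg (by nlinarith [Nat.cast_nonneg (α := ℝ) m])]
    nlinarith [Nat.cast_nonneg (α := ℝ) m]

lemma wC_zero : wC 0 = 1 := by simp [wC, wA_zero]

lemma wC_abs_le_one (m : ℕ) : |wC m| ≤ 1 := by
  rw [wC, abs_div]
  calc |wA m| / |1 - 2*(m:ℝ)| ≤ |wA m| :=
        div_le_self (abs_nonneg _) (one_le_abs_one_sub_two_mul m)
    _ ≤ 1 := wA_abs_le_one m

/-- auxiliary summability of `m * r^(m-1)` -/
lemma aux_summable_deriv {r : ℝ} (hr0 : 0 ≤ r) (hr1 : r < 1) :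
    Summable (fun m : ℕ => (m:ℝ) * r^(m-1)) := by
  rw [← summable_nat_add_iff 1]
  have h1 : Summable (fun n : ℕ => (n:ℝ)^1 * r^n + r^n) :=
    (summable_pow_mul_geometric_of_norm_lt_one 1
      (by rwa [Real.norm_eq_abs, abs_of_nonneg hr0])).add
      (summable_geometric_of_lt_one hr0 hr1)
  refine h1.congr fun n => ?_
  push_cast
  ring_nf

/-- The general binomial series `(1-z)^(-α) = ∑ b m z^m` for coefficients satisfying
the hypergeometric recurrence. -/
lemma hasSum_binomialSeries (b : ℕ → ℝ) (α : ℂ) (hb0 : b 0 = 1)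
    (hrec : ∀ m : ℕ, ((m:ℂ)+1) * b (m+1) = ((m:ℂ) + α) * b m)
    (hbd : ∀ m, |b m| ≤ 1) {z : ℂ} (hz : ‖z‖ < 1) :
    HasSum (fun m => (b m : ℂ) * z ^ m) ((1 - z) ^ (-α)) := by
  -- summability of the series and of the derived series
  have hsum : ∀ w : ℂ, ‖w‖ < 1 → Summable (fun m => (b m : ℂ) * w ^ m) := by
    intro w hw
    refine Summable.of_norm_bounded
      (summable_geometric_of_lt_one (norm_nonneg w) hw) fun m => ?_
    rw [norm_mul, norm_pow, Complex.norm_real, Real.norm_eq_abs]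
    calc |b m| * ‖w‖^m ≤ 1 * ‖w‖^m :=
          mul_le_mul_of_nonneg_right (hbd m) (by positivity)
      _ = ‖w‖^m := one_mul _
  have hsum' : ∀ w : ℂ, ‖w‖ < 1 → Summable (fun m => (b m : ℂ) * ((m:ℂ) * w ^ (m-1))) := by
    intro w hw
    refine Summable.of_norm_bounded
      (aux_summable_deriv (norm_nonneg w) hw) fun m => ?_
    rw [norm_mul, norm_mul, norm_pow, Complex.norm_real, Real.norm_eq_abs, Complex.norm_natCast]
    calc |b m| * ((m:ℝ) * ‖w‖^(m-1)) ≤ 1 * ((m:ℝ) * ‖w‖^(m-1)) :=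
          mul_le_mul_of_nonneg_right (hbd m) (by positivity)
      _ = (m:ℝ) * ‖w‖^(m-1) := one_mul _
  set f : ℂ → ℂ := fun w => ∑' m, (b m : ℂ) * w ^ m with hf
  -- derivative of f inside the unit ball
  have hderiv : ∀ w ∈ Metric.ball (0:ℂ) 1,
      HasDerivAt f (∑' m, (b m : ℂ) * ((m:ℂ) * w ^ (m-1))) w := by
    intro w hw
    rw [Metric.mem_ball, dist_zero_right] at hw
    set r : ℝ := (1 + ‖w‖)/2 with hrdef
    have hr0 : 0 ≤ r := by positivity
    have hr1 : r < 1 := by rw [hrdef]; linarith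
    have hwr : ‖w‖ < r := by rw [hrdef]; linarith
    refine hasDerivAt_tsum_of_isPreconnected (u := fun (m : ℕ) => (m:ℝ) * r^(m-1))
      (aux_summable_deriv hr0 hr1) Metric.isOpen_ball
      ((convex_ball (0:ℂ) r).isPreconnected)
      (g := fun (m : ℕ) (y : ℂ) => (b m : ℂ) * y ^ m)
      (g' := fun (m : ℕ) (y : ℂ) => (b m : ℂ) * ((m:ℂ) * y ^ (m-1)))
      (fun m y _ => (hasDerivAt_pow m y).const_mul _)
      (fun m y hy => ?_) (y₀ := 0) (Metric.mem_ball_self (by positivity))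
      (hsum 0 (by norm_num)) (by simpa [Metric.mem_ball, dist_zero_right] using hwr)
    · rw [Metric.mem_ball, dist_zero_right] at hy
      rw [norm_mul, norm_mul, norm_pow, Complex.norm_real, Real.norm_eq_abs,
        Complex.norm_natCast]
      calc |b m| * ((m:ℝ) * ‖y‖^(m-1)) ≤ 1 * ((m:ℝ) * ‖y‖^(m-1)) :=
            mul_le_mul_of_nonneg_right (hbd m) (by positivity)
        _ = (m:ℝ) * ‖y‖^(m-1) := one_mul _
        _ ≤ (m:ℝ) * r^(m-1) := by
            apply mul_le_mul_of_nonneg_left _ (Nat.cast_nonneg m)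
            exact pow_le_pow_left₀ (norm_nonneg y) hy.le _
  -- the key algebraic identity for the derivative
  have hkey : ∀ w : ℂ, ‖w‖ < 1 →
      (1 - w) * (∑' m, (b m : ℂ) * ((m:ℂ) * w ^ (m-1))) = α * f w := by
    intro w hw
    have hs1 := hsum' w hw
    have hs2 : Summable (fun m => (b (m+1) : ℂ) * (((m:ℂ)+1) * w ^ m)) := by
      have := (summable_nat_add_iff 1).2 hs1
      refine this.congr fun m => ?_
      push_cast
      simp
    have hs3 : Summable (fun m => (b m : ℂ) * ((m:ℂ) * w ^ m)) := by
      refine Summable.of_norm_bounded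
        (aux_summable_deriv (norm_nonneg w) hw) fun m => ?_
      rw [norm_mul, norm_mul, norm_pow, Complex.norm_real, Real.norm_eq_abs,
        Complex.norm_natCast]
      rcases m with _ | m
      · simp
      · calc |b (m+1)| * (((m+1:ℕ):ℝ) * ‖w‖^(m+1)) ≤ 1 * (((m+1:ℕ):ℝ) * ‖w‖^(m+1)) :=
              mul_le_mul_of_nonneg_right (hbd _) (by positivity)
          _ = ((m+1:ℕ):ℝ) * ‖w‖^(m+1) := one_mul _
          _ ≤ ((m+1:ℕ):ℝ) * ‖w‖^(m+1-1) := by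
              apply mul_le_mul_of_nonneg_left _ (Nat.cast_nonneg _)
              simp only [Nat.add_sub_cancel]
              exact pow_le_pow_of_le_one (norm_nonneg w) hw.le (by omega)
    -- D = ∑ b_{m+1} (m+1) w^m
    have h4 : (∑' m, (b m : ℂ) * ((m:ℂ) * w ^ (m-1)))
        = ∑' m, (b (m+1) : ℂ) * (((m:ℂ)+1) * w ^ m) := by
      rw [Summable.tsum_eq_zero_add hs1]
      simp only [Nat.cast_zero, zero_mul, mul_zero, zero_add]
      congr 1
      funext m
      push_cast
      simp
    -- w * D = ∑ b_m m w^m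
    have h2 : w * (∑' m, (b m : ℂ) * ((m:ℂ) * w ^ (m-1)))
        = ∑' m, (b m : ℂ) * ((m:ℂ) * w ^ m) := by
      rw [← tsum_mul_left]
      congr 1
      funext m
      rcases m with _ | m
      · simp
      · simp only [Nat.add_sub_cancel]
        push_cast
        ring
    rw [sub_mul, one_mul, h2, h4, ← Summable.tsum_sub hs2 hs3]
    have : (fun m => (b (m+1) : ℂ) * (((m:ℂ)+1) * w ^ m) - (b m : ℂ) * ((m:ℂ) * w ^ m))
        = fun m => α * ((b m : ℂ) * w ^ m) := by
      funext m
      linear_combination w ^ m * hrec m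
    rw [this, tsum_mul_left]
  -- slit plane facts
  have hslit : ∀ w : ℂ, ‖w‖ < 1 → (1 - w) ∈ Complex.slitPlane := by
    intro w hw
    left
    have : w.re < 1 := lt_of_le_of_lt (le_trans (le_abs_self _) (Complex.abs_re_le_norm w)) hw
    simpa using by linarith
  have hne : ∀ w : ℂ, ‖w‖ < 1 → (1 : ℂ) - w ≠ 0 :=
    fun w hw => Complex.slitPlane_ne_zero (hslit w hw)
  -- g = f * (1-·)^α has zero derivative
  have hg' : ∀ w ∈ Metric.ball (0:ℂ) 1,
      HasDerivAt (fun y => f y * (1 - y) ^ α) 0 w := by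
    intro w hw
    have hw' : ‖w‖ < 1 := by simpa [Metric.mem_ball, dist_zero_right] using hw
    have hd2 : HasDerivAt (fun y : ℂ => (1 - y) ^ α) (α * (1-w)^(α-1) * (-1)) w :=
      HasDerivAt.cpow_const (by simpa using ((hasDerivAt_id w).const_sub 1)) (hslit w hw')
    have hd := (hderiv w hw).mul hd2
    have hsplit : (1 - w) ^ α = (1-w)^(α-1) * (1-w) := by
      conv_lhs => rw [show α = (α-1)+1 by ring]
      rw [Complex.cpow_add _ _ (hne w hw'), Complex.cpow_one]
    refine HasDerivAt.congr_deriv hd (Eq.symm ?_)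
    rw [hsplit]
    have hk := hkey w hw'
    linear_combination (-((1-w):ℂ)^(α-1)) * hk
  -- constancy on the ball
  have hconst : f z * (1 - z) ^ α = 1 := by
    have hz' : z ∈ Metric.ball (0:ℂ) 1 := by
      simpa [Metric.mem_ball, dist_zero_right] using hz
    have h0 : (0:ℂ) ∈ Metric.ball (0:ℂ) 1 := by simp
    have hcst := Convex.is_const_of_fderivWithin_eq_zero (𝕜 := ℂ) (convex_ball (0:ℂ) 1)
      (f := fun y => f y * (1 - y) ^ α)
      (fun y hy => ((hg' y hy).differentiableAt).differentiableWithinAt)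
      (fun y hy => by
        rw [fderivWithin_of_isOpen Metric.isOpen_ball hy, (hg' y hy).hasFDerivAt.fderiv]
        ext1
        simp) hz' h0
    have hcst' : f z * (1 - z) ^ α = f 0 * (1 - 0) ^ α := hcst
    rw [hcst']
    have hf0 : f 0 = 1 := by
      show (∑' m, (b m : ℂ) * (0:ℂ) ^ m) = 1
      rw [tsum_eq_single 0 (fun m hm => by simp [zero_pow hm])]
      simp [hb0]
    simp [hf0]
  -- conclude
  have hcne : (1 - z) ^ α ≠ 0 := by
    intro h
    rw [Complex.cpow_eq_zero_iff] at h
    exact (hne z hz) h.1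
  have hfz : f z = (1 - z) ^ (-α) := by
    rw [Complex.cpow_neg]
    field_simp
    linear_combination hconst
  have hts : (∑' m, (b m : ℂ) * z ^ m) = (1 - z) ^ (-α) := hfz
  have := (hsum z hz).hasSum
  rwa [hts] at this

lemma hasSum_wA_complex {z : ℂ} (hz : ‖z‖ < 1) :
    HasSum (fun m => (wA m : ℂ) * z ^ m) ((1 - z) ^ (-((1:ℂ)/2))) := by
  refine hasSum_binomialSeries wA ((1:ℂ)/2) wA_zero (fun m => ?_) wA_abs_le_one hz
  have h2 : (2*(m:ℂ)+2) ≠ 0 := by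
    intro h
    have : (m:ℂ) = -1 := by linear_combination h/2
    have := congrArg Complex.re this
    simp at this
    nlinarith [Nat.cast_nonneg (α := ℝ) m]
  rw [wA_succ]
  push_cast
  field_simp

lemma wC_rec (m : ℕ) : ((m:ℝ)+1) * wC (m+1) = ((m:ℝ) - 1/2) * wC m := by
  have h1 := one_sub_two_mul_ne m
  have h2 := one_sub_two_mul_ne (m+1)
  have h3 : (2*(m:ℝ)+2) ≠ 0 := by positivity
  rw [wC, wC, wA_succ]
  push_cast at h2 ⊢
  have h4 : (2*(m:ℝ)+1) ≠ 0 := by positivity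
  have h5 : (1 - (m:ℝ)*2) ≠ 0 := by rwa [mul_comm]
  rw [show (1:ℝ) - 2*((m:ℝ)+1) = -(2*m+1) by ring]
  field_simp
  ring

lemma hasSum_wC_complex {z : ℂ} (hz : ‖z‖ < 1) :
    HasSum (fun m => (wC m : ℂ) * z ^ m) ((1 - z) ^ ((1:ℂ)/2)) := by
  have h := hasSum_binomialSeries wC (-((1:ℂ)/2)) wC_zero (fun m => ?_) wC_abs_le_one hz
  · convert h using 2
    norm_num
  · have h2 := congrArg (fun r : ℝ => (r : ℂ)) (wC_rec m)
    push_cast at h2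
    linear_combination h2

/-- real binomial series, `(1-x)^(-1/2)` -/
lemma hasSum_rpow_neg_half {x : ℝ} (h0 : 0 ≤ x) (h1 : x < 1) :
    HasSum (fun m => wA m * x ^ m) ((1-x) ^ (-(1:ℝ)/2)) := by
  have hz : ‖(x:ℂ)‖ < 1 := by
    rw [Complex.norm_real, Real.norm_eq_abs, abs_of_nonneg h0]; exact h1
  have h := hasSum_wA_complex hz
  have he : ((1:ℂ) - (x:ℂ)) ^ (-((1:ℂ)/2)) = (((1-x) ^ (-(1:ℝ)/2) : ℝ) : ℂ) := by
    rw [Complex.ofReal_cpow (by linarith)]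
    push_cast
    norm_num
  rw [he] at h
  have hfe : (fun m => ((wA m * x ^ m : ℝ) : ℂ)) = fun m => (wA m : ℂ) * (x:ℂ) ^ m := by
    funext m; push_cast; ring
  rw [← hfe] at h
  exact Complex.hasSum_ofReal.1 h

/-- real binomial series, `(1-x)^(1/2)` -/
lemma hasSum_rpow_half {x : ℝ} (h0 : 0 ≤ x) (h1 : x < 1) :
    HasSum (fun m => wC m * x ^ m) ((1-x) ^ ((1:ℝ)/2)) := by
  have hz : ‖(x:ℂ)‖ < 1 := by
    rw [Complex.norm_real, Real.norm_eq_abs, abs_of_nonneg h0]; exact h1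
  have h := hasSum_wC_complex hz
  have he : ((1:ℂ) - (x:ℂ)) ^ ((1:ℂ)/2) = (((1-x) ^ ((1:ℝ)/2) : ℝ) : ℂ) := by
    rw [Complex.ofReal_cpow (by linarith)]
    push_cast
    norm_num
  rw [he] at h
  have hfe : (fun m => ((wC m * x ^ m : ℝ) : ℂ)) = fun m => (wC m : ℂ) * (x:ℂ) ^ m := by
    funext m; push_cast; ring
  rw [← hfe] at h
  exact Complex.hasSum_ofReal.1 h

/-- Wallis integral -/
lemma integral_sin_pow_even_half (m : ℕ) :
    ∫ θ in (0:ℝ)..(π/2), sin θ ^ (2*m) = π/2 * wA m := by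
  have hint : ∀ a b : ℝ, IntervalIntegrable (fun x => sin x ^ (2*m)) MeasureTheory.volume a b :=
    fun a b => (continuous_sin.pow _).intervalIntegrable a b
  have hsymm : ∫ θ in (π/2:ℝ)..π, sin θ ^ (2*m) = ∫ θ in (0:ℝ)..(π/2), sin θ ^ (2*m) := by
    have h1 : ∫ θ in (π/2:ℝ)..π, sin θ ^ (2*m)
        = ∫ θ in (π/2:ℝ)..π, sin (π - θ) ^ (2*m) := by
      refine intervalIntegral.integral_congr fun θ _ => ?_
      rw [Real.sin_pi_sub]
    rw [h1, intervalIntegral.integral_comp_sub_left (fun x => sin x ^ (2*m)) π, sub_self,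
      sub_half]
  have hsplit : (∫ θ in (0:ℝ)..(π/2), sin θ ^ (2*m)) + ∫ θ in (π/2:ℝ)..π, sin θ ^ (2*m)
      = ∫ θ in (0:ℝ)..π, sin θ ^ (2*m) :=
    intervalIntegral.integral_add_adjacent_intervals (hint _ _) (hint _ _)
  have := integral_sin_pow_even (n := m)
  rw [← hsplit, hsymm] at this
  have : 2 * ∫ θ in (0:ℝ)..(π/2), sin θ ^ (2*m) = π * wA m := by
    rw [wA]; linarith [this]
  linarith [this]

/-- series for ellK -/
lemma hasSum_ellK {t : ℝ} (ht0 : 0 < t) (ht1 : t < 1) :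
    HasSum (fun m => (wA m * wA m) * t ^ m) (2/π * ellK t) := by
  classical
  set fm : ℕ → C(ℝ, ℝ) := fun m =>
    ⟨fun θ => wA m * t^m * sin θ^(2*m), by continuity⟩ with hfm
  have hb : Summable fun m => ‖(fm m).restrict
      (↑(⟨Set.uIcc 0 (π/2), isCompact_uIcc⟩ : TopologicalSpace.Compacts ℝ))‖ := by
    refine Summable.of_nonneg_of_le (fun m => norm_nonneg _) (fun m => ?_)
      (summable_geometric_of_lt_one ht0.le ht1)
    refine ContinuousMap.norm_le _ (by positivity) |>.2 fun θ => ?_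
    simp only [ContinuousMap.restrict_apply, hfm, ContinuousMap.coe_mk]
    rw [Real.norm_eq_abs, abs_mul, abs_mul]
    have h1 : |wA m| ≤ 1 := wA_abs_le_one m
    have h2 : |t^m| = t^m := abs_of_nonneg (by positivity)
    have h3 : |sin (θ:ℝ)^(2*m)| ≤ 1 := by
      rw [abs_pow]
      exact pow_le_one₀ (abs_nonneg _) (abs_sin_le_one _)
    calc |wA m| * |t^m| * |sin (θ:ℝ)^(2*m)| ≤ 1 * |t^m| * 1 := by
          apply mul_le_mul (mul_le_mul h1 le_rfl (abs_nonneg _) zero_le_one) h3 (abs_nonneg _)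
          positivity
      _ = t^m := by rw [h2]; ring
  have H := intervalIntegral.hasSum_intervalIntegral_of_summable_norm (a := 0) (b := π/2) hb
  have heq : (∫ x in (0:ℝ)..(π/2), ∑' m, (fm m) x) = ellK t := by
    rw [ellK]
    refine intervalIntegral.integral_congr fun θ _ => ?_
    have hx0 : (0:ℝ) ≤ t * sin θ^2 := by positivity
    have hx1 : t * sin θ^2 < 1 := by
      nlinarith [sin_sq_le_one θ, abs_sin_le_one θ]
    have hs := hasSum_rpow_neg_half hx0 hx1
    have : (fun m => wA m * (t * sin θ^2) ^ m) = fun m => (fm m) θ := by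
      funext m
      simp only [hfm, ContinuousMap.coe_mk]
      rw [mul_pow, pow_mul]
      ring
    rw [this] at hs
    exact hs.tsum_eq
  rw [heq] at H
  have hint : ∀ m, (∫ x in (0:ℝ)..(π/2), (fm m) x) = π/2 * (wA m * wA m * t^m) := by
    intro m
    simp only [hfm, ContinuousMap.coe_mk]
    rw [intervalIntegral.integral_const_mul, integral_sin_pow_even_half]
    ring
  rw [show (fun m => ∫ x in (0:ℝ)..(π/2), (fm m) x)
      = fun m => π/2 * (wA m * wA m * t^m) from funext hint] at H
  have H3 := H.mul_left (2/π)
  have hπ : (π:ℝ) ≠ 0 := Real.pi_ne_zero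
  have hfe2 : (fun m => (2/π) * (π/2 * (wA m * wA m * t^m)))
      = fun m => wA m * wA m * t^m := by
    funext m; field_simp
  rw [hfe2] at H3
  exact H3

/-- series for ellE -/
lemma hasSum_ellE {t : ℝ} (ht0 : 0 < t) (ht1 : t < 1) :
    HasSum (fun m => (wC m * wA m) * t ^ m) (2/π * ellE t) := by
  classical
  set fm : ℕ → C(ℝ, ℝ) := fun m =>
    ⟨fun θ => wC m * t^m * sin θ^(2*m), by continuity⟩ with hfm
  have hb : Summable fun m => ‖(fm m).restrict
      (↑(⟨Set.uIcc 0 (π/2), isCompact_uIcc⟩ : TopologicalSpace.Compacts ℝ))‖ := by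
    refine Summable.of_nonneg_of_le (fun m => norm_nonneg _) (fun m => ?_)
      (summable_geometric_of_lt_one ht0.le ht1)
    refine ContinuousMap.norm_le _ (by positivity) |>.2 fun θ => ?_
    simp only [ContinuousMap.restrict_apply, hfm, ContinuousMap.coe_mk]
    rw [Real.norm_eq_abs, abs_mul, abs_mul]
    have h1 : |wC m| ≤ 1 := wC_abs_le_one m
    have h2 : |t^m| = t^m := abs_of_nonneg (by positivity)
    have h3 : |sin (θ:ℝ)^(2*m)| ≤ 1 := by
      rw [abs_pow]
      exact pow_le_one₀ (abs_nonneg _) (abs_sin_le_one _)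
    calc |wC m| * |t^m| * |sin (θ:ℝ)^(2*m)| ≤ 1 * |t^m| * 1 := by
          apply mul_le_mul (mul_le_mul h1 le_rfl (abs_nonneg _) zero_le_one) h3 (abs_nonneg _)
          positivity
      _ = t^m := by rw [h2]; ring
  have H := intervalIntegral.hasSum_intervalIntegral_of_summable_norm (a := 0) (b := π/2) hb
  have heq : (∫ x in (0:ℝ)..(π/2), ∑' m, (fm m) x) = ellE t := by
    rw [ellE]
    refine intervalIntegral.integral_congr fun θ _ => ?_
    have hx0 : (0:ℝ) ≤ t * sin θ^2 := by positivity
    have hx1 : t * sin θ^2 < 1 := by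
      nlinarith [sin_sq_le_one θ, abs_sin_le_one θ]
    have hs := hasSum_rpow_half hx0 hx1
    have : (fun m => wC m * (t * sin θ^2) ^ m) = fun m => (fm m) θ := by
      funext m
      simp only [hfm, ContinuousMap.coe_mk]
      rw [mul_pow, pow_mul]
      ring
    rw [this] at hs
    exact hs.tsum_eq
  rw [heq] at H
  have hint : ∀ m, (∫ x in (0:ℝ)..(π/2), (fm m) x) = π/2 * (wC m * wA m * t^m) := by
    intro m
    simp only [hfm, ContinuousMap.coe_mk]
    rw [intervalIntegral.integral_const_mul, integral_sin_pow_even_half]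
    ring
  rw [show (fun m => ∫ x in (0:ℝ)..(π/2), (fm m) x)
      = fun m => π/2 * (wC m * wA m * t^m) from funext hint] at H
  have H3 := H.mul_left (2/π)
  have hπ : (π:ℝ) ≠ 0 := Real.pi_ne_zero
  have hfe2 : (fun m => (2/π) * (π/2 * (wC m * wA m * t^m)))
      = fun m => wC m * wA m * t^m := by
    funext m; field_simp
  rw [hfe2] at H3
  exact H3

lemma aux_norm_summable (b : ℕ → ℝ) (hbd : ∀ m, |b m| ≤ 1) {z : ℂ} (hz : ‖z‖ < 1) :
    Summable (fun m => ‖(b m : ℂ) * z ^ m‖) := by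
  refine Summable.of_nonneg_of_le (fun m => norm_nonneg _) (fun m => ?_)
    (summable_geometric_of_lt_one (norm_nonneg z) hz)
  rw [norm_mul, norm_pow, Complex.norm_real, Real.norm_eq_abs]
  calc |b m| * ‖z‖^m ≤ 1 * ‖z‖^m :=
        mul_le_mul_of_nonneg_right (hbd m) (by positivity)
    _ = ‖z‖^m := one_mul _

lemma norm_exp_I_int_mul (d : ℤ) (θ : ℝ) : ‖Complex.exp (Complex.I * (d:ℂ) * θ)‖ = 1 := by
  rw [Complex.norm_exp]
  have : (Complex.I * (d:ℂ) * (θ:ℂ)).re = 0 := by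
    simp [Complex.mul_re, Complex.mul_im]
  rw [this, Real.exp_zero]

lemma norm_exp_I_real (c : ℝ) (θ : ℝ) : ‖Complex.exp (Complex.I * (c:ℂ) * θ)‖ = 1 := by
  rw [Complex.norm_exp]
  have : (Complex.I * (c:ℂ) * (θ:ℂ)).re = 0 := by
    simp [Complex.mul_re, Complex.mul_im]
  rw [this, Real.exp_zero]

set_option maxHeartbeats 1000000 in
/-- The master evaluation of the Fourier-type integrals. -/
lemma fourier_integral_eval (b : ℕ → ℝ) (hbd : ∀ m, |b m| ≤ 1) {k : ℝ}
    (hk0 : 0 ≤ k) (hk1 : k < 1) (σ : ℂ)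
    (hs : ∀ z : ℂ, ‖z‖ < 1 → HasSum (fun m => (b m : ℂ) * z ^ m) ((1 - z) ^ σ))
    (n : ℤ) (e : ℕ → ℕ × ℕ) (hinj : Function.Injective e)
    (hdiag : ∀ m, ((e m).2 : ℤ) = (e m).1 + n)
    (hcov : ∀ p : ℕ × ℕ, ((p.2 : ℤ) = p.1 + n) → p ∈ Set.range e)
    (hgrow : ∀ m, m ≤ (e m).1 + (e m).2) :
    (∫ θ in (-π:ℝ)..π, Complex.exp (Complex.I * (n:ℂ) * θ) *
        ((1 : ℂ) - (k:ℂ) * Complex.exp (Complex.I * θ)) ^ σ *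
        ((1 : ℂ) - (k:ℂ) * Complex.exp (-(Complex.I * θ))) ^ σ)
      = ((2*π:ℝ):ℂ) *
        ((∑' m, b (e m).1 * b (e m).2 * k ^ ((e m).1 + (e m).2) : ℝ) : ℂ) := by
  classical
  -- the continuous summands
  have hcont : ∀ p : ℕ × ℕ, Continuous (fun θ : ℝ =>
      ((b p.1 * b p.2 * k^(p.1+p.2) : ℝ) : ℂ) *
        Complex.exp (Complex.I * ((n + p.1 - p.2 : ℤ) : ℂ) * θ)) := by
    intro p
    fun_prop
  set F : ℕ × ℕ → C(ℝ, ℂ) := fun p =>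
    ⟨fun θ => ((b p.1 * b p.2 * k^(p.1+p.2) : ℝ) : ℂ) *
        Complex.exp (Complex.I * ((n + p.1 - p.2 : ℤ) : ℂ) * θ), hcont p⟩ with hF
  -- norm of exp factor is 1
  have hnorm : ∀ (p : ℕ × ℕ) (θ : ℝ), ‖F p θ‖ = |b p.1 * b p.2 * k^(p.1+p.2)| := by
    intro p θ
    rw [hF]
    simp only [ContinuousMap.coe_mk]
    rw [norm_mul, norm_exp_I_int_mul, mul_one, Complex.norm_real, Real.norm_eq_abs]
  -- summability of sup norms
  have hgeo : Summable (fun m : ℕ => ‖k ^ m‖) := by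
    refine (summable_geometric_of_lt_one hk0 hk1).congr fun m => ?_
    rw [Real.norm_eq_abs, abs_of_nonneg (by positivity)]
  have hgeo2 : Summable (fun p : ℕ × ℕ => k ^ p.1 * k ^ p.2) :=
    summable_mul_of_summable_norm hgeo hgeo
  have hb : Summable fun p : ℕ × ℕ => ‖(F p).restrict
      (↑(⟨Set.uIcc (-π) π, isCompact_uIcc⟩ : TopologicalSpace.Compacts ℝ))‖ := by
    refine Summable.of_nonneg_of_le (fun p => norm_nonneg _) (fun p => ?_) hgeo2
    refine ContinuousMap.norm_le _ (by positivity) |>.2 fun θ => ?_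
    rw [ContinuousMap.restrict_apply, hnorm]
    rw [abs_mul, abs_mul, abs_of_nonneg (show (0:ℝ) ≤ k^(p.1+p.2) by positivity), pow_add]
    calc |b p.1| * |b p.2| * (k^p.1 * k^p.2) ≤ 1 * 1 * (k^p.1 * k^p.2) := by
          apply mul_le_mul _ le_rfl (by positivity) (by norm_num)
          exact mul_le_mul (hbd _) (hbd _) (abs_nonneg _) zero_le_one
      _ = k^p.1 * k^p.2 := by ring
  -- the sum of the series is the integrand
  have hpt : ∀ θ : ℝ, HasSum (fun p : ℕ × ℕ => F p θ)
      (Complex.exp (Complex.I * (n:ℂ) * θ) *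
        ((1 : ℂ) - (k:ℂ) * Complex.exp (Complex.I * θ)) ^ σ *
        ((1 : ℂ) - (k:ℂ) * Complex.exp (-(Complex.I * θ))) ^ σ) := by
    intro θ
    have hz1 : ‖(k:ℂ) * Complex.exp (Complex.I * θ)‖ < 1 := by
      rw [norm_mul]
      have := norm_exp_I_real 1 θ
      rw [Complex.ofReal_one, mul_one] at this
      rw [this, mul_one, Complex.norm_real, Real.norm_eq_abs, abs_of_nonneg hk0]
      exact hk1
    have hz2 : ‖(k:ℂ) * Complex.exp (-(Complex.I * θ))‖ < 1 := by
      rw [norm_mul]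
      have := norm_exp_I_real (-1) θ
      have h2 : Complex.I * ((-1:ℝ):ℂ) * θ = -(Complex.I * θ) := by push_cast; ring
      rw [h2] at this
      rw [this, mul_one, Complex.norm_real, Real.norm_eq_abs, abs_of_nonneg hk0]
      exact hk1
    have h1 := hs _ hz1
    have h2 := hs _ hz2
    have hsm : Summable (fun p : ℕ × ℕ =>
        ((b p.1 : ℂ) * ((k:ℂ) * Complex.exp (Complex.I * θ)) ^ p.1) *
          ((b p.2 : ℂ) * ((k:ℂ) * Complex.exp (-(Complex.I * θ))) ^ p.2)) :=
      summable_mul_of_summable_norm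
        (f := fun m => (b m : ℂ) * ((k:ℂ) * Complex.exp (Complex.I * θ)) ^ m)
        (g := fun m => (b m : ℂ) * ((k:ℂ) * Complex.exp (-(Complex.I * θ))) ^ m)
        (aux_norm_summable b hbd hz1) (aux_norm_summable b hbd hz2)
    have hmul := h1.mul h2 hsm
    have hmul2 := hmul.mul_left (Complex.exp (Complex.I * (n:ℂ) * θ))
    have hterm : (fun p : ℕ × ℕ => Complex.exp (Complex.I * (n:ℂ) * θ) *
        ((b p.1 : ℂ) * ((k:ℂ) * Complex.exp (Complex.I * θ)) ^ p.1 *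
          ((b p.2 : ℂ) * ((k:ℂ) * Complex.exp (-(Complex.I * θ))) ^ p.2)))
        = fun p => F p θ := by
      funext p
      rcases p with ⟨m, j⟩
      rw [hF]
      simp only [ContinuousMap.coe_mk]
      rw [mul_pow, mul_pow, ← Complex.exp_nat_mul, ← Complex.exp_nat_mul]
      push_cast
      rw [show Complex.I * ((n:ℂ) + m - j) * θ
          = Complex.I * (n:ℂ) * θ + ((m:ℂ) * (Complex.I * θ) + (j:ℂ) * (-(Complex.I * θ)))
          from by ring, Complex.exp_add, Complex.exp_add]
      ring
    rw [← hterm]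
    rwa [← mul_assoc] at hmul2
  -- swap sum and integral
  have H := intervalIntegral.hasSum_intervalIntegral_of_summable_norm (a := -π) (b := π) hb
  have heq : (∫ x in (-π:ℝ)..π, ∑' p : ℕ × ℕ, F p x)
      = ∫ θ in (-π:ℝ)..π, Complex.exp (Complex.I * (n:ℂ) * θ) *
          ((1 : ℂ) - (k:ℂ) * Complex.exp (Complex.I * θ)) ^ σ *
          ((1 : ℂ) - (k:ℂ) * Complex.exp (-(Complex.I * θ))) ^ σ :=
    intervalIntegral.integral_congr fun θ _ => (hpt θ).tsum_eq
  rw [heq] at H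
  -- evaluate each integral
  have hFint : ∀ p : ℕ × ℕ, (∫ θ in (-π:ℝ)..π, F p θ)
      = if ((p.2 : ℤ) = p.1 + n) then
          ((2*π:ℝ):ℂ) * ((b p.1 * b p.2 * k^(p.1+p.2) : ℝ) : ℂ) else 0 := by
    intro p
    rcases p with ⟨m, j⟩
    set d : ℤ := n + m - j with hd
    have hFval : (fun θ : ℝ => F (m, j) θ)
        = fun θ : ℝ => ((b m * b j * k^(m+j) : ℝ) : ℂ) *
            Complex.exp ((Complex.I * (d:ℂ)) * θ) := by
      funext θ
      rw [hF]
      simp only [ContinuousMap.coe_mk, hd]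
    by_cases hc : (j : ℤ) = (m : ℤ) + n
    · have hd0 : d = 0 := by omega
      rw [if_pos hc, hFval, hd0]
      push_cast
      simp only [mul_zero, zero_mul, Complex.exp_zero, mul_one]
      rw [intervalIntegral.integral_const, Complex.real_smul]
      push_cast
      ring
    · have hd0 : d ≠ 0 := by omega
      rw [if_neg hc, hFval, intervalIntegral.integral_const_mul]
      have hIc : Complex.I * (d:ℂ) ≠ 0 :=
        mul_ne_zero Complex.I_ne_zero (Int.cast_ne_zero.2 hd0)
      rw [integral_exp_mul_complex hIc]
      have hexp : Complex.exp (Complex.I * (d:ℂ) * (π:ℂ))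
          = Complex.exp (Complex.I * (d:ℂ) * ((-π:ℝ):ℂ)) := by
        rw [Complex.exp_eq_exp_iff_exists_int]
        exact ⟨d, by push_cast; ring⟩
      rw [hexp]
      simp
  -- identify the sum with the diagonal series
  have hCsum : Summable (fun m : ℕ => b (e m).1 * b (e m).2 * k ^ ((e m).1 + (e m).2)) := by
    refine Summable.of_norm_bounded
      (summable_geometric_of_lt_one hk0 hk1) fun m => ?_
    rw [Real.norm_eq_abs, abs_mul, abs_mul,
      abs_of_nonneg (show (0:ℝ) ≤ k^((e m).1 + (e m).2) by positivity)]
    calc |b (e m).1| * |b (e m).2| * k^((e m).1 + (e m).2)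
        ≤ 1 * 1 * k^((e m).1 + (e m).2) := by
          apply mul_le_mul _ le_rfl (by positivity) (by norm_num)
          exact mul_le_mul (hbd _) (hbd _) (abs_nonneg _) zero_le_one
      _ = k^((e m).1 + (e m).2) := by ring
      _ ≤ k ^ m := pow_le_pow_of_le_one hk0 hk1.le (hgrow m)
  have hdsum : HasSum (fun p : ℕ × ℕ => ∫ θ in (-π:ℝ)..π, F p θ)
      (((2*π:ℝ):ℂ) *
        ((∑' m, b (e m).1 * b (e m).2 * k ^ ((e m).1 + (e m).2) : ℝ) : ℂ)) := by
    rw [← Function.Injective.hasSum_iff hinj (fun p hp => ?_)]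
    · have hC : HasSum (fun m : ℕ => ((b (e m).1 * b (e m).2 * k ^ ((e m).1 + (e m).2) : ℝ) : ℂ))
          (((∑' m, b (e m).1 * b (e m).2 * k ^ ((e m).1 + (e m).2) : ℝ) : ℂ)) :=
        Complex.hasSum_ofReal.2 hCsum.hasSum
      have h2 := hC.mul_left ((2*π:ℝ):ℂ)
      have hfe : ((fun p => ∫ θ in (-π:ℝ)..π, F p θ) ∘ e)
          = fun m => ((2*π:ℝ):ℂ) *
              ((b (e m).1 * b (e m).2 * k ^ ((e m).1 + (e m).2) : ℝ) : ℂ) := by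
        funext m
        show (∫ θ in (-π:ℝ)..π, F (e m) θ) = _
        rw [hFint (e m), if_pos (hdiag m)]
      rw [hfe]
      exact h2
    · rw [hFint p, if_neg]
      intro hdg
      exact hp (hcov p hdg)
  exact HasSum.unique H hdsum

lemma cid1 (m : ℕ) : wA m * wA (m+1) = wA (m+1) * wA (m+1) - wC (m+1) * wA (m+1) := by
  have h1 := one_sub_two_mul_ne (m+1)
  have h3 : (2*(m:ℝ)+2) ≠ 0 := by positivity
  rw [wC, wA_succ]
  push_cast at h1 ⊢
  field_simp
  ring

lemma cid2 (m : ℕ) : (wC (m+1) - wA (m+1))^2 = wA m * wA m := by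
  have h1 := one_sub_two_mul_ne (m+1)
  have h3 : (2*(m:ℝ)+2) ≠ 0 := by positivity
  rw [wC, wA_succ]
  push_cast at h1 ⊢
  field_simp
  ring

lemma cid3 (m : ℕ) : wC m * wC (m+1)
    = -(1/3) * (wA m * wA m + wC m * wA m - wA (m+1) * wA (m+1)
        + wC (m+1) * wA (m+1)) := by
  have h1 := one_sub_two_mul_ne (m+1)
  have h2 := one_sub_two_mul_ne m
  have h3 : (2*(m:ℝ)+2) ≠ 0 := by positivity
  rw [wC, wC, wA_succ]
  push_cast at h1 h2 ⊢
  field_simp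
  ring

/-- Complete elliptic integral evaluations of the scattering Fourier coefficients. -/
theorem scattering_fourier_elliptic (t : ℝ) (ht0 : 0 < t) (ht1 : t < 1) :
    Fcoeff t 0 = (((2 / π) * ellK t : ℝ) : ℂ) ∧
    Fcoeff t 1 = (((2 / π) * t ^ (-(1:ℝ)/2) * (ellK t - ellE t) : ℝ) : ℂ) ∧
    Fcoeff t (-1) = (((2 / π) * t ^ (-(1:ℝ)/2) * (ellK t - ellE t) : ℝ) : ℂ) ∧
    Fbcoeff t 0 = (((2 / π) * ((t - 1) * ellK t + 2 * ellE t) : ℝ) : ℂ) ∧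
    Fbcoeff t 1 = ((-(2 / (3 * π)) * t ^ (-(1:ℝ)/2) *
      ((t - 1) * ellK t + (t + 1) * ellE t) : ℝ) : ℂ) ∧
    Fbcoeff t (-1) = ((-(2 / (3 * π)) * t ^ (-(1:ℝ)/2) *
      ((t - 1) * ellK t + (t + 1) * ellE t) : ℝ) : ℂ) := by
  have hk0 : (0:ℝ) ≤ Real.sqrt t := Real.sqrt_nonneg t
  have hkpos : 0 < Real.sqrt t := Real.sqrt_pos.2 ht0
  have hk1 : Real.sqrt t < 1 := by
    rw [show (1:ℝ) = Real.sqrt 1 by simp]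
    exact Real.sqrt_lt_sqrt ht0.le ht1
  have hsq : Real.sqrt t * Real.sqrt t = t := Real.mul_self_sqrt ht0.le
  have hπ : (π:ℝ) ≠ 0 := pi_ne_zero
  have hπC : (π:ℂ) ≠ 0 := Complex.ofReal_ne_zero.2 pi_ne_zero
  have hrt : t ^ (-(1:ℝ)/2) = (Real.sqrt t)⁻¹ := by
    rw [show (-(1:ℝ)/2) = -(1/2 : ℝ) by norm_num, Real.rpow_neg ht0.le, ← Real.sqrt_eq_rpow]
  have hpow2 : ∀ m : ℕ, Real.sqrt t ^ (m + m) = t ^ m := by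
    intro m
    rw [pow_add, ← mul_pow, hsq]
  have hpow21 : ∀ m : ℕ, Real.sqrt t ^ (m + (m+1)) = t ^ m * Real.sqrt t := by
    intro m
    rw [show m + (m+1) = (m+m)+1 by omega, pow_succ, hpow2]
  have hpow21' : ∀ m : ℕ, Real.sqrt t ^ ((m+1) + m) = t ^ m * Real.sqrt t := by
    intro m
    rw [show (m+1) + m = (m+m)+1 by omega, pow_succ, hpow2]
  -- elliptic integral series
  have SK := hasSum_ellK ht0 ht1
  have SE := hasSum_ellE ht0 ht1
  have SK1 : HasSum (fun m => wA (m+1) * wA (m+1) * t^(m+1)) (2/π * ellK t - 1) := by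
    rw [hasSum_nat_add_iff (f := fun m => wA m * wA m * t ^ m) 1]
    rw [show (2/π * ellK t - 1 + ∑ i ∈ Finset.range 1, wA i * wA i * t ^ i) = 2/π * ellK t by
      simp [wA_zero]]
    exact SK
  have SE1 : HasSum (fun m => wC (m+1) * wA (m+1) * t^(m+1)) (2/π * ellE t - 1) := by
    rw [hasSum_nat_add_iff (f := fun m => wC m * wA m * t ^ m) 1]
    rw [show (2/π * ellE t - 1 + ∑ i ∈ Finset.range 1, wC i * wA i * t ^ i) = 2/π * ellE t by
      simp [wA_zero, wC_zero]]
    exact SE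
  -- summabilities
  have hgeo := summable_geometric_of_lt_one ht0.le ht1
  have habs : ∀ (c : ℕ → ℝ), (∀ m, |c m| ≤ 1) → Summable (fun m => c m * t ^ m) := by
    intro c hc
    refine Summable.of_norm_bounded hgeo fun m => ?_
    rw [Real.norm_eq_abs, abs_mul, abs_of_nonneg (show (0:ℝ) ≤ t^m by positivity)]
    calc |c m| * t^m ≤ 1 * t^m := mul_le_mul_of_nonneg_right (hc m) (by positivity)
      _ = t^m := one_mul _
  have Ssum1 : Summable (fun m => wA m * wA (m+1) * t^m) := by
    refine habs _ fun m => ?_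
    rw [abs_mul]
    calc |wA m| * |wA (m+1)| ≤ 1 * 1 :=
          mul_le_mul (wA_abs_le_one m) (wA_abs_le_one (m+1)) (abs_nonneg _) zero_le_one
      _ = 1 := one_mul _
  have Ssum2 : Summable (fun m => wC m * wC (m+1) * t^m) := by
    refine habs _ fun m => ?_
    rw [abs_mul]
    calc |wC m| * |wC (m+1)| ≤ 1 * 1 :=
          mul_le_mul (wC_abs_le_one m) (wC_abs_le_one (m+1)) (abs_nonneg _) zero_le_one
      _ = 1 := one_mul _
  -- combined series identities
  have K1 : HasSum (fun m => wA m * wA (m+1) * t^(m+1)) (2/π * ellK t - 2/π * ellE t) := by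
    have h := SK1.sub SE1
    have hfe : (fun m => wA (m+1) * wA (m+1) * t^(m+1) - wC (m+1) * wA (m+1) * t^(m+1))
        = fun m => wA m * wA (m+1) * t^(m+1) := by
      funext m
      linear_combination (-(t^(m+1))) * cid1 m
    rw [hfe] at h
    rw [show 2/π * ellK t - 2/π * ellE t = (2/π * ellK t - 1) - (2/π * ellE t - 1) by ring]
    exact h
  have hT1 : (∑' m, wA m * wA (m+1) * t^m) * t = 2/π * ellK t - 2/π * ellE t := by
    have h2 := Ssum1.hasSum.mul_right t
    have hfe : (fun m => wA m * wA (m+1) * t^m * t) = fun m => wA m * wA (m+1) * t^(m+1) := by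
      funext m
      rw [pow_succ]
      ring
    rw [hfe] at h2
    exact h2.unique K1
  have KS : HasSum (fun m => (wC m - wA m)^2 * t^m) (t * (2/π * ellK t)) := by
    have h := SK.mul_left t
    have hfe : (fun m => t * (wA m * wA m * t^m))
        = fun m => (wC (m+1) - wA (m+1))^2 * t^(m+1) := by
      funext m
      rw [pow_succ]
      linear_combination (-(t^m * t)) * cid2 m
    rw [hfe] at h
    rw [hasSum_nat_add_iff (f := fun m => (wC m - wA m)^2 * t^m) 1] at h
    simpa [wC_zero, wA_zero] using h
  have G0 : HasSum (fun m => wC m * wC m * t^m) (2/π * ((t-1) * ellK t + 2 * ellE t)) := by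
    have h := (KS.sub SK).add (SE.mul_left 2)
    have hfe : (fun m => ((wC m - wA m)^2 * t^m - wA m * wA m * t^m) + 2 * (wC m * wA m * t^m))
        = fun m => wC m * wC m * t^m := by
      funext m
      ring
    rw [hfe] at h
    rw [show 2/π * ((t-1) * ellK t + 2 * ellE t)
      = t * (2/π * ellK t) - 2/π * ellK t + 2 * (2/π * ellE t) by ring]
    exact h
  have G1b : HasSum (fun m => wC m * wC (m+1) * t^(m+1))
      (-(1/3) * ((t - 1) * (2/π * ellK t) + (t + 1) * (2/π * ellE t))) := by
    have h := ((((SK.mul_left t).add (SE.mul_left t)).sub SK1).add SE1).mul_left (-(1/3))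
    have hfe : (fun m => -(1/3) * ((t * (wA m * wA m * t^m) + t * (wC m * wA m * t^m)
          - wA (m+1) * wA (m+1) * t^(m+1)) + wC (m+1) * wA (m+1) * t^(m+1)))
        = fun m => wC m * wC (m+1) * t^(m+1) := by
      funext m
      rw [pow_succ]
      linear_combination (-(t^m * t)) * cid3 m
    rw [hfe] at h
    rw [show -(1/3) * ((t - 1) * (2/π * ellK t) + (t + 1) * (2/π * ellE t))
      = -(1/3) * (t * (2/π * ellK t) + t * (2/π * ellE t) - (2/π * ellK t - 1)
        + (2/π * ellE t - 1)) by ring]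
    exact h
  have hT2 : (∑' m, wC m * wC (m+1) * t^m) * t
      = -(1/3) * ((t - 1) * (2/π * ellK t) + (t + 1) * (2/π * ellE t)) := by
    have h2 := Ssum2.hasSum.mul_right t
    have hfe : (fun m => wC m * wC (m+1) * t^m * t) = fun m => wC m * wC (m+1) * t^(m+1) := by
      funext m
      rw [pow_succ]
      ring
    rw [hfe] at h2
    exact h2.unique G1b
  -- embeddings
  have hinjA : Function.Injective (fun m : ℕ => ((m, m) : ℕ × ℕ)) :=
    fun a b h => by simpa using congrArg Prod.fst h
  have hinjB : Function.Injective (fun m : ℕ => ((m, m+1) : ℕ × ℕ)) :=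
    fun a b h => by simpa using congrArg Prod.fst h
  have hinjC : Function.Injective (fun m : ℕ => ((m+1, m) : ℕ × ℕ)) :=
    fun a b h => by simpa using congrArg Prod.snd h
  have hdiagA : ∀ m : ℕ, ((((fun m : ℕ => ((m, m) : ℕ × ℕ)) m).2 : ℤ))
      = ((fun m : ℕ => ((m, m) : ℕ × ℕ)) m).1 + (0:ℤ) := fun m => by simp
  have hdiagB : ∀ m : ℕ, ((((fun m : ℕ => ((m, m+1) : ℕ × ℕ)) m).2 : ℤ))
      = ((fun m : ℕ => ((m, m+1) : ℕ × ℕ)) m).1 + (1:ℤ) := fun m => by push_cast; ring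
  have hdiagC : ∀ m : ℕ, ((((fun m : ℕ => ((m+1, m) : ℕ × ℕ)) m).2 : ℤ))
      = ((fun m : ℕ => ((m+1, m) : ℕ × ℕ)) m).1 + (-1:ℤ) := fun m => by push_cast; ring
  have hcovA : ∀ p : ℕ × ℕ, ((p.2 : ℤ) = p.1 + (0:ℤ)) →
      p ∈ Set.range (fun m : ℕ => ((m, m) : ℕ × ℕ)) := by
    rintro ⟨a, c⟩ hp
    exact ⟨a, by simp at hp ⊢; omega⟩
  have hcovB : ∀ p : ℕ × ℕ, ((p.2 : ℤ) = p.1 + (1:ℤ)) →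
      p ∈ Set.range (fun m : ℕ => ((m, m+1) : ℕ × ℕ)) := by
    rintro ⟨a, c⟩ hp
    exact ⟨a, by simp at hp ⊢; omega⟩
  have hcovC : ∀ p : ℕ × ℕ, ((p.2 : ℤ) = p.1 + (-1:ℤ)) →
      p ∈ Set.range (fun m : ℕ => ((m+1, m) : ℕ × ℕ)) := by
    rintro ⟨a, c⟩ hp
    exact ⟨c, by simp at hp ⊢; omega⟩
  have hgrowA : ∀ m : ℕ, m ≤ ((fun m : ℕ => ((m, m) : ℕ × ℕ)) m).1
      + ((fun m : ℕ => ((m, m) : ℕ × ℕ)) m).2 := fun m => by simp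
  have hgrowB : ∀ m : ℕ, m ≤ ((fun m : ℕ => ((m, m+1) : ℕ × ℕ)) m).1
      + ((fun m : ℕ => ((m, m+1) : ℕ × ℕ)) m).2 := fun m => by simp
  have hgrowC : ∀ m : ℕ, m ≤ ((fun m : ℕ => ((m+1, m) : ℕ × ℕ)) m).1
      + ((fun m : ℕ => ((m+1, m) : ℕ × ℕ)) m).2 := fun m => by simp
  -- value computations
  have hval1 : (∑' m, wA m * wA (m+1) * t^m) * Real.sqrt t
      = 2 / π * t ^ (-(1:ℝ)/2) * (ellK t - ellE t) := by
    rw [hrt]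
    apply mul_right_cancel₀ hkpos.ne'
    rw [mul_assoc, hsq, hT1]
    field_simp
  have hval2 : (∑' m, wC m * wC (m+1) * t^m) * Real.sqrt t
      = -(2 / (3 * π)) * t ^ (-(1:ℝ)/2) * ((t - 1) * ellK t + (t + 1) * ellE t) := by
    rw [hrt]
    apply mul_right_cancel₀ hkpos.ne'
    rw [mul_assoc, hsq, hT2]
    field_simp
  -- the integral evaluations
  have hI0 := fourier_integral_eval wA wA_abs_le_one hk0 hk1 (-((1:ℂ)/2))
    (fun z hz => hasSum_wA_complex hz) 0 _ hinjA hdiagA hcovA hgrowA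
  have hI1 := fourier_integral_eval wA wA_abs_le_one hk0 hk1 (-((1:ℂ)/2))
    (fun z hz => hasSum_wA_complex hz) 1 _ hinjB hdiagB hcovB hgrowB
  have hI1' := fourier_integral_eval wA wA_abs_le_one hk0 hk1 (-((1:ℂ)/2))
    (fun z hz => hasSum_wA_complex hz) (-1) _ hinjC hdiagC hcovC hgrowC
  have hJ0 := fourier_integral_eval wC wC_abs_le_one hk0 hk1 ((1:ℂ)/2)
    (fun z hz => hasSum_wC_complex hz) 0 _ hinjA hdiagA hcovA hgrowA
  have hJ1' := fourier_integral_eval wC wC_abs_le_one hk0 hk1 ((1:ℂ)/2)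
    (fun z hz => hasSum_wC_complex hz) (-1) _ hinjC hdiagC hcovC hgrowC
  have hJ1 := fourier_integral_eval wC wC_abs_le_one hk0 hk1 ((1:ℂ)/2)
    (fun z hz => hasSum_wC_complex hz) 1 _ hinjB hdiagB hcovB hgrowB
  -- tsum simplifications
  have hS0 : (∑' m : ℕ, wA ((fun m : ℕ => ((m,m):ℕ×ℕ)) m).1 * wA ((fun m : ℕ => ((m,m):ℕ×ℕ)) m).2
      * Real.sqrt t ^ (((fun m : ℕ => ((m,m):ℕ×ℕ)) m).1 + ((fun m : ℕ => ((m,m):ℕ×ℕ)) m).2))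
      = 2/π * ellK t := by
    rw [← SK.tsum_eq]
    refine tsum_congr fun m => ?_
    show wA m * wA m * Real.sqrt t ^ (m + m) = wA m * wA m * t ^ m
    rw [hpow2 m]
  have hS1 : (∑' m : ℕ, wA ((fun m : ℕ => ((m,m+1):ℕ×ℕ)) m).1
      * wA ((fun m : ℕ => ((m,m+1):ℕ×ℕ)) m).2
      * Real.sqrt t ^ (((fun m : ℕ => ((m,m+1):ℕ×ℕ)) m).1 + ((fun m : ℕ => ((m,m+1):ℕ×ℕ)) m).2))
      = 2 / π * t ^ (-(1:ℝ)/2) * (ellK t - ellE t) := by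
    rw [← hval1, ← tsum_mul_right]
    refine tsum_congr fun m => ?_
    show wA m * wA (m+1) * Real.sqrt t ^ (m + (m+1)) = wA m * wA (m+1) * t ^ m * Real.sqrt t
    rw [hpow21 m]
    ring
  have hS1' : (∑' m : ℕ, wA ((fun m : ℕ => ((m+1,m):ℕ×ℕ)) m).1
      * wA ((fun m : ℕ => ((m+1,m):ℕ×ℕ)) m).2
      * Real.sqrt t ^ (((fun m : ℕ => ((m+1,m):ℕ×ℕ)) m).1 + ((fun m : ℕ => ((m+1,m):ℕ×ℕ)) m).2))
      = 2 / π * t ^ (-(1:ℝ)/2) * (ellK t - ellE t) := by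
    rw [← hval1, ← tsum_mul_right]
    refine tsum_congr fun m => ?_
    show wA (m+1) * wA m * Real.sqrt t ^ ((m+1) + m) = wA m * wA (m+1) * t ^ m * Real.sqrt t
    rw [hpow21' m]
    ring
  have hSb0 : (∑' m : ℕ, wC ((fun m : ℕ => ((m,m):ℕ×ℕ)) m).1 * wC ((fun m : ℕ => ((m,m):ℕ×ℕ)) m).2
      * Real.sqrt t ^ (((fun m : ℕ => ((m,m):ℕ×ℕ)) m).1 + ((fun m : ℕ => ((m,m):ℕ×ℕ)) m).2))
      = 2/π * ((t-1) * ellK t + 2 * ellE t) := by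
    rw [← G0.tsum_eq]
    refine tsum_congr fun m => ?_
    show wC m * wC m * Real.sqrt t ^ (m + m) = wC m * wC m * t ^ m
    rw [hpow2 m]
  have hSb1 : (∑' m : ℕ, wC ((fun m : ℕ => ((m+1,m):ℕ×ℕ)) m).1
      * wC ((fun m : ℕ => ((m+1,m):ℕ×ℕ)) m).2
      * Real.sqrt t ^ (((fun m : ℕ => ((m+1,m):ℕ×ℕ)) m).1 + ((fun m : ℕ => ((m+1,m):ℕ×ℕ)) m).2))
      = -(2 / (3 * π)) * t ^ (-(1:ℝ)/2) * ((t - 1) * ellK t + (t + 1) * ellE t) := by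
    rw [← hval2, ← tsum_mul_right]
    refine tsum_congr fun m => ?_
    show wC (m+1) * wC m * Real.sqrt t ^ ((m+1) + m) = wC m * wC (m+1) * t ^ m * Real.sqrt t
    rw [hpow21' m]
    ring
  have hSb1' : (∑' m : ℕ, wC ((fun m : ℕ => ((m,m+1):ℕ×ℕ)) m).1
      * wC ((fun m : ℕ => ((m,m+1):ℕ×ℕ)) m).2
      * Real.sqrt t ^ (((fun m : ℕ => ((m,m+1):ℕ×ℕ)) m).1 + ((fun m : ℕ => ((m,m+1):ℕ×ℕ)) m).2))
      = -(2 / (3 * π)) * t ^ (-(1:ℝ)/2) * ((t - 1) * ellK t + (t + 1) * ellE t) := by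
    rw [← hval2, ← tsum_mul_right]
    refine tsum_congr fun m => ?_
    show wC m * wC (m+1) * Real.sqrt t ^ (m + (m+1)) = wC m * wC (m+1) * t ^ m * Real.sqrt t
    rw [hpow21 m]
    ring
  -- final scalar arithmetic
  have hhalf : ∀ z : ℂ, (1 / (2 * (π:ℂ))) * (((2*π:ℝ):ℂ) * z) = z := by
    intro z
    push_cast
    field_simp
  -- flipping the sign in the exponential for Fbcoeff
  have hflip : ∀ n m : ℤ, m = -n → (∫ θ in (-π:ℝ)..π, Complex.exp (-(Complex.I * (n:ℂ) * θ)) *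
      ((1:ℂ) - (Real.sqrt t : ℂ) * Complex.exp (Complex.I * θ)) ^ ((1:ℂ)/2) *
      ((1:ℂ) - (Real.sqrt t : ℂ) * Complex.exp (-(Complex.I * θ))) ^ ((1:ℂ)/2))
      = ∫ θ in (-π:ℝ)..π, Complex.exp (Complex.I * (m:ℂ) * θ) *
      ((1:ℂ) - (Real.sqrt t : ℂ) * Complex.exp (Complex.I * θ)) ^ ((1:ℂ)/2) *
      ((1:ℂ) - (Real.sqrt t : ℂ) * Complex.exp (-(Complex.I * θ))) ^ ((1:ℂ)/2) := by
    intro n m hnm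
    refine intervalIntegral.integral_congr fun θ _ => ?_
    have harg : -(Complex.I * (n:ℂ) * θ) = Complex.I * (m:ℂ) * θ := by
      rw [hnm]
      push_cast
      ring
    rw [harg]
  refine ⟨?_, ?_, ?_, ?_, ?_, ?_⟩
  · simp only [Fcoeff]
    rw [hI0, hS0, hhalf]
  · simp only [Fcoeff]
    rw [hI1, hS1, hhalf]
  · simp only [Fcoeff]
    rw [hI1', hS1', hhalf]
  · simp only [Fbcoeff]
    rw [hflip 0 0 (by norm_num), hJ0, hSb0, hhalf]
  · simp only [Fbcoeff]
    rw [hflip 1 (-1) (by norm_num), hJ1', hSb1, hhalf]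
  · simp only [Fbcoeff]
    rw [hflip (-1) 1 (by norm_num), hJ1, hSb1', hhalf]
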